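/- arXiv:cs/9902010 — 3 statements merged into one kernel-verified Lean document; each statement's English description precedes it below -/
import Mathlib

section
/- Privacy of the MSP secret sharing scheme: if B ⊆ P is unqualified, i.e., ε = (1,0,...,0) is not in the row span of M_B, then there exists a vector k ∈ K^e with M_B k = 0 and first coordinate k_1 = 1. Consequently, for any two secrets a, a' ∈ K and any sharing vector a_* with first coordinate a, the vector a_* + (a' − a)·k is a sharing vector with first coordinate a' giving B exactly the same shares: M_B(a_* + (a'−a)k) = M_B a_*. -/
/-- Privacy of MSP secret sharing: if `B` is unqualified (`ε` is not in the span
of the rows of `M_B`), then there is a kernel vector `k` of `M_B` with first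
coordinate `1`; consequently for any secrets `a, a'` and sharing vector `astar` of
`a`, the vector `astar + (a' - a) • k` shares `a'` and gives `B` the same shares. -/
theorem msp_unqualified_privacy {P : Type*} (K : Type*) [Field K] (d e : ℕ)
    (M : Matrix (Fin d) (Fin (e + 1)) K) (ψ : Fin d → P)
    (hψ : Function.Surjective ψ) (B : Set P)
    (hB : (Pi.single (0 : Fin (e + 1)) (1 : K)) ∉
      Submodule.span K (M '' {l | ψ l ∈ B})) :
    ∃ k : Fin (e + 1) → K, (∀ l, ψ l ∈ B → M.mulVec k l = 0) ∧ k 0 = 1 ∧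
      ∀ a a' : K, ∀ astar : Fin (e + 1) → K, astar 0 = a →
        ((astar + (a' - a) • k) 0 = a' ∧
          ∀ l, ψ l ∈ B → M.mulVec (astar + (a' - a) • k) l = M.mulVec astar l) := by
  obtain ⟨f0, hf0, hfbot0⟩ :=
    Submodule.exists_dual_map_eq_bot_of_notMem hB inferInstance
  set f := (f0 (Pi.single (0 : Fin (e + 1)) (1 : K)))⁻¹ • f0 with hfdef
  have hf1 : f (Pi.single (0 : Fin (e + 1)) (1 : K)) = 1 := by
    simp [hfdef, inv_mul_cancel₀ hf0]
  have hfbot : ∀ v ∈ Submodule.span K (M '' {l | ψ l ∈ B}), f v = 0 := by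
    intro v hv
    have : f0 v = 0 := by
      have := Submodule.map_le_iff_le_comap.mp hfbot0.le hv
      simpa using this
    simp [hfdef, this]
  set k : Fin (e + 1) → K := fun j => f (Pi.single j 1) with hk
  have hfval : ∀ v : Fin (e + 1) → K, f v = ∑ j, v j * k j := by
    intro v
    have : v = ∑ j, v j • (Pi.single j (1 : K) : Fin (e+1) → K) := by
      funext i
      simp [Finset.sum_apply, Pi.single_apply]
    conv_lhs => rw [this]
    simp [hk, smul_eq_mul]
  have hker : ∀ l, ψ l ∈ B → M.mulVec k l = 0 := by
    intro l hl
    have hmem : M l ∈ Submodule.span K (M '' {l | ψ l ∈ B}) :=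
      Submodule.subset_span ⟨l, hl, rfl⟩
    have : f (M l) = 0 := hfbot _ hmem
    rw [hfval] at this
    simpa [Matrix.mulVec, dotProduct] using this
  have hk0 : k 0 = 1 := hf1
  refine ⟨k, hker, hk0, ?_⟩
  intro a a' astar hastar
  constructor
  · simp [hastar, hk0]
  · intro l hl
    rw [Matrix.mulVec_add, Matrix.mulVec_smul]
    simp [hker l hl]
end

section
/- If an MSP (K, M, ψ) has the multiplication property, then the adversary structure A_f it rejects is Q^2: for any partition of the players into B and P \ B, at least one of B, P \ B is qualified. -/
private lemma aux_dual_vec {K : Type*} [Field K] {n : ℕ} {d : ℕ} [NeZero n]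
    (M : Matrix (Fin d) (Fin n) K) (S : Set (Fin d))
    (h : (Pi.single (0 : Fin n) (1 : K)) ∉ Submodule.span K (M '' S)) :
    ∃ k : Fin n → K, k 0 ≠ 0 ∧ ∀ l ∈ S, M.mulVec k l = 0 := by
  obtain ⟨f, hf0, hfbot⟩ :=
    (Submodule.span K (M '' S)).exists_dual_map_eq_bot_of_notMem h inferInstance
  refine ⟨fun i => f (Pi.single i 1), ?_, ?_⟩
  · simpa using hf0
  · intro l hl
    have hmem : (M l : Fin n → K) ∈ Submodule.span K (M '' S) :=
      Submodule.subset_span ⟨l, hl, rfl⟩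
    have hz : f (M l) = 0 := by
      have := hfbot.le (Submodule.mem_map_of_mem hmem)
      simpa using this
    have hfl : f (M l) = ∑ i, M l i * f (Pi.single i 1) := by
      rw [LinearMap.pi_apply_eq_sum_univ f (M l)]
      refine Finset.sum_congr rfl fun i _ => ?_
      rw [smul_eq_mul]
      congr 1
      congr 1
      ext j
      simp [Pi.single_apply, eq_comm]
    rw [Matrix.mulVec, dotProduct]
    rw [hfl] at hz
    exact hz

/-- If an MSP has the multiplication property then its adversary structure is
`Q^2`: for any set `B` of players, at least one of `B` and its complement is
qualified. -/
theorem msp_with_multiplication_q2 {P : Type*} (K : Type*) [Field K] (d e : ℕ)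
    (M : Matrix (Fin d) (Fin (e + 1)) K) (ψ : Fin d → P)
    (hψ : Function.Surjective ψ) (r : Fin d → K)
    (hr : ∀ u v : Fin (e + 1) → K,
      ∑ l, r l * (M.mulVec u l * M.mulVec v l) = u 0 * v 0)
    (B : Set P) :
    (Pi.single (0 : Fin (e + 1)) (1 : K)) ∈
        Submodule.span K (M '' {l | ψ l ∈ B}) ∨
      (Pi.single (0 : Fin (e + 1)) (1 : K)) ∈
        Submodule.span K (M '' {l | ψ l ∈ Bᶜ}) := by
  by_contra hcon
  push_neg at hcon
  obtain ⟨h1, h2⟩ := hcon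
  obtain ⟨k, hk0, hk⟩ := aux_dual_vec M _ h1
  obtain ⟨k', hk'0, hk'⟩ := aux_dual_vec M _ h2
  have hzero : ∑ l, r l * (M.mulVec k l * M.mulVec k' l) = 0 := by
    apply Finset.sum_eq_zero
    intro l _
    by_cases hb : ψ l ∈ B
    · rw [hk l hb]; ring
    · rw [hk' l hb]; ring
  rw [hr k k'] at hzero
  exact mul_ne_zero hk0 hk'0 hzero
end

section
/- A counting lower bound: the number of distinct adversary structures over n players that are Q^2 is at least 2^(C(n-1, ⌊(n-1)/2⌋)), and hence superpolynomially many; consequently not all families of Q^2 adversary structures over n players can be rejected by monotone span programs of size polynomial in n. -/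
/-- Counting lower bound: there are at least `2 ^ (C(n-1, ⌊(n-1)/2⌋))` distinct
`Q^2` adversary structures (downward-closed families no two of whose members
cover the player set) over `n ≥ 1` players. -/
theorem q2_structures_counting_lower_bound (n : ℕ) (hn : 1 ≤ n) :
    2 ^ Nat.choose (n - 1) ((n - 1) / 2) ≤
      Nat.card {A : Finset (Finset (Fin n)) //
        (∀ B ∈ A, ∀ B' ⊆ B, B' ∈ A) ∧
          ∀ B ∈ A, ∀ C ∈ A, B ∪ C ≠ Finset.univ} := by
  classical
  set k := (n - 1) / 2 with hk
  have hpos : 0 < n := hn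
  let p : Fin n := ⟨0, hpos⟩
  let U : Finset (Fin n) := Finset.univ.erase p
  let K : Finset (Finset (Fin n)) := U.powersetCard k
  have hU : U.card = n - 1 := by
    simp [U, Finset.card_erase_of_mem]
  have hKcard : K.card = Nat.choose (n - 1) k := by
    simp [K, Finset.card_powersetCard, hU]
  -- the map: downward closure
  let f : Finset (Finset (Fin n)) → Finset (Finset (Fin n)) :=
    fun S => S.biUnion Finset.powerset
  have hmem : ∀ S B, B ∈ f S ↔ ∃ C ∈ S, B ⊆ C := by
    intro S B
    simp [f]
  have hg : ∀ S ∈ K.powerset,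
      (∀ B ∈ f S, ∀ B' ⊆ B, B' ∈ f S) ∧
        ∀ B ∈ f S, ∀ C ∈ f S, B ∪ C ≠ Finset.univ := by
    intro S hS
    rw [Finset.mem_powerset] at hS
    constructor
    · intro B hB B' hB'
      rw [hmem] at hB ⊢
      obtain ⟨C, hC, hBC⟩ := hB
      exact ⟨C, hC, hB'.trans hBC⟩
    · intro B hB C hC hunion
      rw [hmem] at hB hC
      obtain ⟨B1, hB1, hBB1⟩ := hB
      obtain ⟨C1, hC1, hCC1⟩ := hC
      have hB1U : B1 ⊆ U := (Finset.mem_powersetCard.1 (hS hB1)).1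
      have hC1U : C1 ⊆ U := (Finset.mem_powersetCard.1 (hS hC1)).1
      have hp : p ∉ B ∪ C := by
        simp only [Finset.mem_union]
        rintro (h | h)
        · exact (Finset.mem_erase.1 (hB1U (hBB1 h))).1 rfl
        · exact (Finset.mem_erase.1 (hC1U (hCC1 h))).1 rfl
      exact hp (hunion ▸ Finset.mem_univ p)
  let g : ↥K.powerset → {A : Finset (Finset (Fin n)) //
        (∀ B ∈ A, ∀ B' ⊆ B, B' ∈ A) ∧
          ∀ B ∈ A, ∀ C ∈ A, B ∪ C ≠ Finset.univ} :=
    fun S => ⟨f S.1, hg S.1 S.2⟩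
  have hginj : Function.Injective g := by
    rintro ⟨S, hS⟩ ⟨T, hT⟩ hST
    have hfeq : f S = f T := congrArg Subtype.val hST
    rw [Finset.mem_powerset] at hS hT
    have key : ∀ S T : Finset (Finset (Fin n)), S ⊆ K → T ⊆ K → f S = f T →
        S ⊆ T := by
      intro S T hS hT hfeq C hC
      have : C ∈ f T := by
        rw [← hfeq, hmem]; exact ⟨C, hC, le_refl C⟩
      rw [hmem] at this
      obtain ⟨C', hC', hCC'⟩ := this
      have h1 : C.card = k := (Finset.mem_powersetCard.1 (hS hC)).2
      have h2 : C'.card = k := (Finset.mem_powersetCard.1 (hT hC')).2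
      have : C = C' := Finset.eq_of_subset_of_card_le hCC' (by omega)
      exact this ▸ hC'
    exact Subtype.ext (Finset.Subset.antisymm (key S T hS hT hfeq)
      (key T S hT hS hfeq.symm))
  calc 2 ^ Nat.choose (n - 1) k = Nat.card ↥K.powerset := by
        rw [Nat.card_eq_fintype_card, Fintype.card_coe, Finset.card_powerset, hKcard]
    _ ≤ _ := Nat.card_le_card_of_injective g hginj
end
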